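/- Let A(ω) be a symmetric positive-definite 2×2 matrix with eigenvalues 1 and c₀(ω) > 0, diagonalized as A(ω) = P(ω)ᵀ diag(1, c₀(ω)) P(ω) with P(ω) orthogonal. If F : ℝ² → ℝ² satisfies Yᵀ A(ω) F(Y) = 0 for all Y ∈ ℝ² and each component of F is a homogeneous quadratic polynomial in Y, then there exist constants c̃₁, c̃₂ (depending on ω) such that P(ω) F(P(ω)ᵀ Ỹ) = (c̃₁ Ỹ₁ + c̃₂ Ỹ₂) · (-c₀(ω) Ỹ₂, Ỹ₁)ᵀ for all Ỹ = (Ỹ₁, Ỹ₂) ∈ ℝ². -/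

import Mathlib

open Matrix

/-- If A = Pᵀ diag(1,c₀) P with P orthogonal and c₀ > 0, and
F : ℝ² → ℝ² has homogeneous quadratic components and satisfies Yᵀ A F(Y) = 0 for
all Y, then P F(Pᵀ Ỹ) = (c̃₁Ỹ₁ + c̃₂Ỹ₂)·(-c₀Ỹ₂, Ỹ₁)ᵀ for some constants c̃₁, c̃₂. -/
theorem stmt19 (c₀ : ℝ) (hc₀ : 0 < c₀)
    (P : Matrix (Fin 2) (Fin 2) ℝ) (hP : Pᵀ * P = 1)
    (F : (Fin 2 → ℝ) → (Fin 2 → ℝ))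
    (hquad : ∀ j : Fin 2, ∃ a b c : ℝ, ∀ Y : Fin 2 → ℝ,
      F Y j = a * Y 0 ^ 2 + b * Y 0 * Y 1 + c * Y 1 ^ 2)
    (hperp : ∀ Y : Fin 2 → ℝ,
      Y ⬝ᵥ (Pᵀ * Matrix.diagonal ![1, c₀] * P).mulVec (F Y) = 0) :
    ∃ c₁ c₂ : ℝ, ∀ Yt : Fin 2 → ℝ,
      P.mulVec (F (Pᵀ.mulVec Yt)) = (c₁ * Yt 0 + c₂ * Yt 1) • ![-c₀ * Yt 1, Yt 0] := by
  obtain ⟨a0, b0, d0, hF0⟩ := hquad 0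
  obtain ⟨a1, b1, d1, hF1⟩ := hquad 1
  have hPP : P * Pᵀ = 1 := mul_eq_one_comm.mp hP
  have e00 : P 0 0 * P 0 0 + P 0 1 * P 0 1 = 1 := by
    have := congrFun (congrFun hPP 0) 0
    simpa [Matrix.mul_apply, Fin.sum_univ_two, Matrix.one_apply] using this
  have e01 : P 0 0 * P 1 0 + P 0 1 * P 1 1 = 0 := by
    have := congrFun (congrFun hPP 0) 1
    simpa [Matrix.mul_apply, Fin.sum_univ_two, Matrix.one_apply] using this
  have e11 : P 1 0 * P 1 0 + P 1 1 * P 1 1 = 1 := by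
    have := congrFun (congrFun hPP 1) 1
    simpa [Matrix.mul_apply, Fin.sum_univ_two, Matrix.one_apply] using this
  -- components of G(x,y) := P F(Pᵀ (x,y)) as explicit quadratics
  have hG : ∀ i : Fin 2, ∀ x y : ℝ,
      P.mulVec (F (Pᵀ.mulVec ![x, y])) i
        = (P i 0 * (a0 * (P 0 0)^2 + b0 * P 0 0 * P 0 1 + d0 * (P 0 1)^2)
            + P i 1 * (a1 * (P 0 0)^2 + b1 * P 0 0 * P 0 1 + d1 * (P 0 1)^2)) * x^2
          + (P i 0 * (2*a0 * P 0 0 * P 1 0 + b0 * (P 0 0 * P 1 1 + P 1 0 * P 0 1) + 2*d0 * P 0 1 * P 1 1)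
            + P i 1 * (2*a1 * P 0 0 * P 1 0 + b1 * (P 0 0 * P 1 1 + P 1 0 * P 0 1) + 2*d1 * P 0 1 * P 1 1)) * (x*y)
          + (P i 0 * (a0 * (P 1 0)^2 + b0 * P 1 0 * P 1 1 + d0 * (P 1 1)^2)
            + P i 1 * (a1 * (P 1 0)^2 + b1 * P 1 0 * P 1 1 + d1 * (P 1 1)^2)) * y^2 := by
    intro i x y
    fin_cases i <;>
    · simp only [Matrix.mulVec, dotProduct, Fin.sum_univ_two, Matrix.transpose_apply,
        Matrix.cons_val_zero, Matrix.cons_val_one, Matrix.head_cons, Fin.isValue]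
      rw [hF0, hF1]
      simp only [Matrix.mulVec, dotProduct, Fin.sum_univ_two, Matrix.transpose_apply,
        Matrix.cons_val_zero, Matrix.cons_val_one, Matrix.head_cons, Fin.isValue]
      ring
  -- name the six coefficients
  set A0 := P 0 0 * (a0 * (P 0 0)^2 + b0 * P 0 0 * P 0 1 + d0 * (P 0 1)^2)
            + P 0 1 * (a1 * (P 0 0)^2 + b1 * P 0 0 * P 0 1 + d1 * (P 0 1)^2) with hA0
  set B0 := P 0 0 * (2*a0 * P 0 0 * P 1 0 + b0 * (P 0 0 * P 1 1 + P 1 0 * P 0 1) + 2*d0 * P 0 1 * P 1 1)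
            + P 0 1 * (2*a1 * P 0 0 * P 1 0 + b1 * (P 0 0 * P 1 1 + P 1 0 * P 0 1) + 2*d1 * P 0 1 * P 1 1) with hB0
  set C0 := P 0 0 * (a0 * (P 1 0)^2 + b0 * P 1 0 * P 1 1 + d0 * (P 1 1)^2)
            + P 0 1 * (a1 * (P 1 0)^2 + b1 * P 1 0 * P 1 1 + d1 * (P 1 1)^2) with hC0
  set A1 := P 1 0 * (a0 * (P 0 0)^2 + b0 * P 0 0 * P 0 1 + d0 * (P 0 1)^2)
            + P 1 1 * (a1 * (P 0 0)^2 + b1 * P 0 0 * P 0 1 + d1 * (P 0 1)^2) with hA1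
  set B1 := P 1 0 * (2*a0 * P 0 0 * P 1 0 + b0 * (P 0 0 * P 1 1 + P 1 0 * P 0 1) + 2*d0 * P 0 1 * P 1 1)
            + P 1 1 * (2*a1 * P 0 0 * P 1 0 + b1 * (P 0 0 * P 1 1 + P 1 0 * P 0 1) + 2*d1 * P 0 1 * P 1 1) with hB1
  set C1 := P 1 0 * (a0 * (P 1 0)^2 + b0 * P 1 0 * P 1 1 + d0 * (P 1 1)^2)
            + P 1 1 * (a1 * (P 1 0)^2 + b1 * P 1 0 * P 1 1 + d1 * (P 1 1)^2) with hC1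
  have hG0 : ∀ x y : ℝ, P.mulVec (F (Pᵀ.mulVec ![x, y])) 0 = A0*x^2 + B0*(x*y) + C0*y^2 :=
    fun x y => hG 0 x y
  have hG1 : ∀ x y : ℝ, P.mulVec (F (Pᵀ.mulVec ![x, y])) 1 = A1*x^2 + B1*(x*y) + C1*y^2 :=
    fun x y => hG 1 x y
  -- rotated perpendicularity:  x G0 + c₀ y G1 = 0
  have hperp' : ∀ x y : ℝ,
      x * (A0*x^2 + B0*(x*y) + C0*y^2) + c₀ * y * (A1*x^2 + B1*(x*y) + C1*y^2) = 0 := by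
    intro x y
    have h := hperp (Pᵀ.mulVec ![x, y])
    rw [← hG0 x y, ← hG1 x y]
    set f0 := F (Pᵀ.mulVec ![x, y]) 0 with hf0
    set f1 := F (Pᵀ.mulVec ![x, y]) 1 with hf1
    simp only [dotProduct, Matrix.mulVec, Matrix.mul_apply, Fin.sum_univ_two,
      Matrix.transpose_apply, Matrix.diagonal_apply, Fin.isValue,
      Matrix.cons_val_zero, Matrix.cons_val_one, Matrix.head_cons] at h ⊢
    norm_num at h ⊢
    have hv : Pᵀ *ᵥ ![x, y] = ![P 0 0 * x + P 1 0 * y, P 0 1 * x + P 1 1 * y] := by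
      ext i; fin_cases i <;> simp [Matrix.mulVec, dotProduct, Fin.sum_univ_two] <;> ring
    rw [hv] at hf0 hf1
    simp only [← hf0, ← hf1] at h ⊢
    linear_combination h - (f0*x*(P 0 0) + f1*x*(P 0 1))*e00
      - (f0*(c₀*x*(P 1 0) + y*(P 0 0)) + f1*(c₀*x*(P 1 1) + y*(P 0 1)))*e01
      - (f0*c₀*y*(P 1 0) + f1*c₀*y*(P 1 1))*e11
  -- extract cubic coefficient relations
  clear_value A0 B0 C0 A1 B1 C1
  clear hperp hF0 hF1 hG hP hPP e00 e01 e11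
  have r1 : A0 = 0 := by have := hperp' 1 0; linarith only [this]
  have r4 : C1 = 0 := by
    have := hperp' 0 1; have : c₀ * C1 = 0 := by linarith only [this]
    exact (mul_eq_zero.mp this).resolve_left (ne_of_gt hc₀)
  have hpp := hperp' 1 1
  have hpm := hperp' 1 (-1)
  have r2 : B0 + c₀ * A1 = 0 := by linear_combination (1/2)*hpp - (1/2)*hpm - c₀*r4
  have r3 : C0 + c₀ * B1 = 0 := by linear_combination (1/2)*hpp + (1/2)*hpm - r1
  refine ⟨A1, B1, fun Yt => ?_⟩
  have hYt : Yt = ![Yt 0, Yt 1] := funext fun k => by fin_cases k <;> rfl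
  have hYt' : Pᵀ.mulVec Yt = Pᵀ.mulVec ![Yt 0, Yt 1] := by rw [← hYt]
  funext i
  fin_cases i
  · show (P *ᵥ F (Pᵀ *ᵥ Yt)) 0 = ((A1 * Yt 0 + B1 * Yt 1) • ![-c₀ * Yt 1, Yt 0]) 0
    rw [hYt', hG0 (Yt 0) (Yt 1)]
    simp only [Matrix.smul_cons, Matrix.smul_empty, Matrix.cons_val_zero, smul_eq_mul]
    linear_combination (Yt 0)^2 * r1 + (Yt 0 * Yt 1) * r2 + (Yt 1)^2 * r3
  · show (P *ᵥ F (Pᵀ *ᵥ Yt)) 1 = ((A1 * Yt 0 + B1 * Yt 1) • ![-c₀ * Yt 1, Yt 0]) 1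
    rw [hYt', hG1 (Yt 0) (Yt 1)]
    simp only [Matrix.smul_cons, Matrix.smul_empty, Matrix.cons_val_one, Matrix.head_cons,
      smul_eq_mul, Matrix.cons_val_zero]
    linear_combination (Yt 1)^2 * r4
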